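/- Let f be an automorphism of a compact complex torus X = V/Λ of dimension d induced by a unipotent linear map with a single Jordan block of size d on V ≅ ℂ^d. Then (formulated linear-algebraically): let N be the operator on ℂ[X,Y]/(X^d,Y^d) given by multiplication by XY + X + Y, and let Ω(n) = Σ_{q=0}^{2d−2} C(n, q+1) N^q(1). Writing Ω(n) = Σ_{0 ≤ i,j ≤ d−1} P_{d−i, d−j}(n) X^i Y^j, the 'determinant' polynomial P(n) = det( (P_{a,b}(n))_{1 ≤ a,b ≤ d} ) has degree exactly d² in n. -/

import Mathlib

open Polynomial Finset

namespace Stmt10Aux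
noncomputable section

abbrev P2 := MvPolynomial (Fin 2) ℂ
def T : P2 := MvPolynomial.X 0 * MvPolynomial.X 1 + MvPolynomial.X 0 + MvPolynomial.X 1

def mIdx (i j : ℕ) : Fin 2 →₀ ℕ := Finsupp.single 0 i + Finsupp.single 1 j

lemma mIdx_apply0 (i j : ℕ) : mIdx i j 0 = i := by simp [mIdx]
lemma mIdx_apply1 (i j : ℕ) : mIdx i j 1 = j := by simp [mIdx]

lemma mIdx_ext (m : Fin 2 →₀ ℕ) : m = mIdx (m 0) (m 1) := by
  ext a
  fin_cases a
  · simp [mIdx]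
  · simp [mIdx]

lemma mIdx_le_iff {a b i j : ℕ} : mIdx a b ≤ mIdx i j ↔ a ≤ i ∧ b ≤ j := by
  rw [Finsupp.le_def]
  constructor
  · intro h
    exact ⟨by simpa [mIdx] using h 0, by simpa [mIdx] using h 1⟩
  · rintro ⟨h1, h2⟩ a
    fin_cases a
    · simpa [mIdx] using h1
    · simpa [mIdx] using h2

lemma mIdx_sub (a b i j : ℕ) : mIdx i j - mIdx a b = mIdx (i - a) (j - b) := by
  ext s
  fin_cases s
  · simp [mIdx, Finsupp.tsub_apply]
  · simp [mIdx, Finsupp.tsub_apply]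

lemma T_eq : T = MvPolynomial.monomial (mIdx 1 1) 1 + MvPolynomial.monomial (mIdx 1 0) 1
    + MvPolynomial.monomial (mIdx 0 1) 1 := by
  unfold T
  rw [show (MvPolynomial.X 0 : P2) = MvPolynomial.monomial (Finsupp.single 0 1) 1 from rfl,
    show (MvPolynomial.X 1 : P2) = MvPolynomial.monomial (Finsupp.single 1 1) 1 from rfl,
    MvPolynomial.monomial_mul]
  simp [mIdx]

def c (q i j : ℕ) : ℂ := MvPolynomial.coeff (mIdx i j) (T ^ q)

lemma c_succ (q i j : ℕ) : c (q+1) i j =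
    (if 1 ≤ i ∧ 1 ≤ j then c q (i-1) (j-1) else 0)
    + (if 1 ≤ i then c q (i-1) j else 0)
    + (if 1 ≤ j then c q i (j-1) else 0) := by
  have h : (T:P2) ^ (q+1) = T ^ q * T := by ring
  rw [c, h]
  nth_rewrite 2 [T_eq]
  rw [mul_add, mul_add, MvPolynomial.coeff_add, MvPolynomial.coeff_add,
    MvPolynomial.coeff_mul_monomial', MvPolynomial.coeff_mul_monomial',
    MvPolynomial.coeff_mul_monomial']
  simp only [mIdx_le_iff, mIdx_sub, mul_one, Nat.le_refl, and_true, true_and, Nat.sub_zero,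
    Nat.zero_le, c]

lemma c_zero_of_lt : ∀ q i j : ℕ, i + j < q → c q i j = 0 := by
  intro q
  induction q with
  | zero => intro i j h; omega
  | succ q ih =>
    intro i j h
    rw [c_succ]
    have e1 : (if 1 ≤ i ∧ 1 ≤ j then c q (i-1) (j-1) else 0) = 0 := by
      split_ifs with h'
      · exact ih _ _ (by omega)
      · rfl
    have e2 : (if 1 ≤ i then c q (i-1) j else 0) = 0 := by
      split_ifs with h'
      · exact ih _ _ (by omega)
      · rfl
    have e3 : (if 1 ≤ j then c q i (j-1) else 0) = 0 := by
      split_ifs with h'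
      · exact ih _ _ (by omega)
      · rfl
    rw [e1, e2, e3]; ring

lemma c_diag : ∀ q i j : ℕ, i + j = q → c q i j = (q.choose i : ℂ) := by
  intro q
  induction q with
  | zero =>
    intro i j h
    have hi : i = 0 := by omega
    have hj : j = 0 := by omega
    subst hi; subst hj
    have h0 : mIdx 0 0 = 0 := by ext a; fin_cases a <;> simp [mIdx]
    rw [c, h0, pow_zero, MvPolynomial.coeff_one]
    simp
  | succ q ih =>
    intro i j h
    rw [c_succ]
    rcases Nat.eq_zero_or_pos i with hi | hi
    · subst hi
      have hj : j = q + 1 := by omega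
      subst hj
      simp only [Nat.not_succ_le_zero, false_and, if_false, if_neg (by omega : ¬ (1:ℕ) ≤ 0)]
      rw [if_pos (by omega : 1 ≤ q + 1), show q + 1 - 1 = q from rfl, ih 0 q (by omega)]
      simp
    rcases Nat.eq_zero_or_pos j with hj | hj
    · subst hj
      have hi' : i = q + 1 := by omega
      subst hi'
      rw [if_neg (by omega), if_neg (by omega : ¬ (1:ℕ) ≤ 0), if_pos (by omega : 1 ≤ q + 1),
        show q + 1 - 1 = q from rfl, ih q 0 (by omega)]
      simp
    have e1 : c q (i-1) (j-1) = 0 := c_zero_of_lt q _ _ (by omega)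
    rw [if_pos (⟨hi, hj⟩ : 1 ≤ i ∧ 1 ≤ j), if_pos (show 1 ≤ i from hi),
      if_pos (show 1 ≤ j from hj), e1,
      ih (i-1) j (by omega), ih i (j-1) (by omega)]
    have hps : (q+1).choose i = q.choose (i-1) + q.choose i := by
      obtain ⟨i', rfl⟩ : ∃ i', i = i' + 1 := ⟨i - 1, by omega⟩
      simp [Nat.choose_succ_succ']
    rw [hps]
    push_cast
    ring

def binomPoly (k : ℕ) : Polynomial ℂ := Polynomial.C ((k.factorial : ℂ)⁻¹) * descPochhammer ℂ k

lemma binomPoly_eval (k n : ℕ) : (binomPoly k).eval (n : ℂ) = (n.choose k : ℂ) := by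
  rw [binomPoly, eval_mul, eval_C, descPochhammer_eval_eq_descFactorial,
    Nat.descFactorial_eq_factorial_mul_choose]
  push_cast
  rw [← mul_assoc, inv_mul_cancel₀ (by exact_mod_cast k.factorial_ne_zero), one_mul]

lemma binomPoly_natDegree (k : ℕ) : (binomPoly k).natDegree = k := by
  have h0 : ((k.factorial : ℂ))⁻¹ ≠ 0 := inv_ne_zero (Nat.cast_ne_zero.mpr k.factorial_ne_zero)
  rw [binomPoly, natDegree_C_mul h0, descPochhammer_natDegree]

lemma binomPoly_coeff_top (k : ℕ) : (binomPoly k).coeff k = (k.factorial : ℂ)⁻¹ := by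
  rw [binomPoly, coeff_C_mul]
  have := monic_descPochhammer ℂ k
  rw [show ((descPochhammer ℂ k).coeff k) = (descPochhammer ℂ k).leadingCoeff from by
    rw [leadingCoeff, descPochhammer_natDegree], this.leadingCoeff, mul_one]

def Rpoly (d i j : ℕ) : Polynomial ℂ :=
  ∑ q ∈ Finset.range (2 * d - 1), Polynomial.C (c q i j) * binomPoly (q + 1)

lemma Rpoly_eval (d i j n : ℕ) :
    (Rpoly d i j).eval (n : ℂ) = ∑ q ∈ Finset.range (2 * d - 1), (n.choose (q+1) : ℂ) * c q i j := by
  rw [Rpoly, eval_finset_sum]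
  refine Finset.sum_congr rfl fun q _ => ?_
  rw [eval_mul, eval_C, binomPoly_eval]
  ring

lemma Rpoly_term_natDegree_le (i j q : ℕ) :
    (Polynomial.C (c q i j) * binomPoly (q + 1)).natDegree ≤ i + j + 1 := by
  rcases le_or_gt q (i + j) with h | h
  · exact (natDegree_C_mul_le _ _).trans (by rw [binomPoly_natDegree]; omega)
  · rw [c_zero_of_lt q i j h, map_zero, zero_mul, natDegree_zero]
    omega

lemma Rpoly_natDegree_le (d i j : ℕ) : (Rpoly d i j).natDegree ≤ i + j + 1 :=
  natDegree_sum_le_of_forall_le _ _ fun q _ => Rpoly_term_natDegree_le i j q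

lemma Rpoly_coeff_top (d i j : ℕ) (hi : i + j ≤ 2 * d - 2) (hd : 1 ≤ d) :
    (Rpoly d i j).coeff (i + j + 1) = ((i+j).choose i : ℂ) * (((i+j+1).factorial : ℂ))⁻¹ := by
  rw [Rpoly, finset_sum_coeff]
  rw [Finset.sum_eq_single (i + j)]
  · rw [coeff_C_mul, binomPoly_coeff_top, c_diag _ i j rfl]
  · intro q _ hq
    rcases lt_or_gt_of_ne hq with h | h
    · exact coeff_eq_zero_of_natDegree_lt (lt_of_le_of_lt
        ((natDegree_C_mul_le _ _).trans (by rw [binomPoly_natDegree])) (by omega))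
    · rw [c_zero_of_lt q i j h, map_zero, zero_mul, coeff_zero]
  · intro hmem
    exfalso
    exact hmem (Finset.mem_range.mpr (by omega))


def Hmat (d : ℕ) : Matrix (Fin d) (Fin d) ℝ :=
  Matrix.of fun i j => (((i:ℕ) + (j:ℕ) + 1 : ℝ))⁻¹

lemma quadform_eq_integral (d : ℕ) (x : Fin d → ℝ) :
    dotProduct x (Matrix.mulVec (Hmat d) x)
      = ∫ t in (0:ℝ)..1, (∑ i : Fin d, x i * t ^ (i:ℕ)) ^ 2 := by
  have key : ∀ t : ℝ, (∑ i : Fin d, x i * t ^ (i:ℕ)) ^ 2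
      = ∑ i : Fin d, ∑ j : Fin d, x i * x j * t ^ ((i:ℕ) + (j:ℕ)) := by
    intro t
    rw [sq, Finset.sum_mul_sum]
    refine Finset.sum_congr rfl fun i _ => Finset.sum_congr rfl fun j _ => ?_
    rw [pow_add]; ring
  simp_rw [key, ← Finset.sum_product']
  rw [intervalIntegral.integral_finset_sum (fun p _ =>
      ((continuous_const.mul (continuous_pow _) :
        Continuous fun t : ℝ => x p.1 * x p.2 * t ^ ((p.1:ℕ)+(p.2:ℕ))).intervalIntegrable 0 1))]
  have inner : ∀ p : Fin d × Fin d,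
      (∫ t in (0:ℝ)..1, x p.1 * x p.2 * t ^ ((p.1:ℕ)+(p.2:ℕ)))
      = x p.1 * x p.2 * (((p.1:ℕ)+(p.2:ℕ)+1 : ℝ))⁻¹ := by
    intro p
    rw [intervalIntegral.integral_const_mul, integral_pow]
    push_cast
    field_simp
    simp
  simp_rw [inner, Finset.sum_product]
  rw [dotProduct]
  refine Finset.sum_congr rfl fun i _ => ?_
  rw [Matrix.mulVec, dotProduct, Finset.mul_sum]
  refine Finset.sum_congr rfl fun j _ => ?_
  simp only [Hmat, Matrix.of_apply]
  ring

lemma Hmat_posDef (d : ℕ) : (Hmat d).PosDef := by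
  rw [Matrix.posDef_iff_dotProduct_mulVec]
  constructor
  · ext i j
    simp only [Matrix.conjTranspose_apply, Hmat, Matrix.of_apply, star_trivial]
    ring_nf
  · intro x hx
    rw [show star x = x from funext fun i => star_trivial _, quadform_eq_integral]
    have hppos : ∃ c ∈ Set.Icc (0:ℝ) 1, 0 < (∑ i : Fin d, x i * c ^ (i:ℕ)) ^ 2 := by
      set p : Polynomial ℝ := ∑ i : Fin d, Polynomial.C (x i) * Polynomial.X ^ (i:ℕ) with hp
      obtain ⟨i₀, hi₀⟩ := Function.ne_iff.mp hx
      have hpne : p ≠ 0 := by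
        intro h0
        apply hi₀
        have : p.coeff (i₀ : ℕ) = x i₀ := by
          rw [hp, finset_sum_coeff]
          rw [Finset.sum_eq_single i₀]
          · simp
          · intro b _ hb
            rw [coeff_C_mul, coeff_X_pow, if_neg (by
              simpa [Fin.val_eq_val] using (Ne.symm hb)), mul_zero]
          · simp
        rw [h0] at this
        simpa using this.symm
      have hroots : {t : ℝ | p.IsRoot t}.Finite := Polynomial.finite_setOf_isRoot hpne
      have hinf : (Set.Icc (0:ℝ) 1 \ {t : ℝ | p.IsRoot t}).Infinite :=
        (Set.Icc_infinite (by norm_num)).diff hroots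
      obtain ⟨c, hc⟩ := hinf.nonempty
      refine ⟨c, hc.1, ?_⟩
      have hev : p.eval c = ∑ i : Fin d, x i * c ^ (i:ℕ) := by
        rw [hp, eval_finset_sum]
        simp
      have hne : (∑ i : Fin d, x i * c ^ (i:ℕ)) ≠ 0 := by
        rw [← hev]
        exact hc.2
      exact lt_of_le_of_ne (sq_nonneg _) (Ne.symm (pow_ne_zero 2 hne))
    exact intervalIntegral.integral_pos zero_lt_one
      (Continuous.continuousOn (by continuity))
      (fun t _ => sq_nonneg _) hppos

lemma Hmat_det_pos (d : ℕ) : 0 < (Hmat d).det := (Hmat_posDef d).det_pos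

def LmatR (d : ℕ) : Matrix (Fin d) (Fin d) ℝ :=
  Matrix.of fun i j =>
    (((i:ℕ).factorial : ℝ))⁻¹ * (((j:ℕ).factorial : ℝ))⁻¹ * (((i:ℕ) + (j:ℕ) + 1 : ℝ))⁻¹

lemma LmatR_det_pos (d : ℕ) : 0 < (LmatR d).det := by
  have hfac : LmatR d = Matrix.diagonal (fun i : Fin d => (((i:ℕ).factorial : ℝ))⁻¹) * Hmat d
      * Matrix.diagonal (fun i : Fin d => (((i:ℕ).factorial : ℝ))⁻¹) := by
    ext i j
    rw [Matrix.mul_diagonal, Matrix.diagonal_mul]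
    simp only [LmatR, Hmat, Matrix.of_apply]
    ring
  rw [hfac, Matrix.det_mul, Matrix.det_mul, Matrix.det_diagonal]
  have hprod : 0 < ∏ i : Fin d, (((i:ℕ).factorial : ℝ))⁻¹ :=
    Finset.prod_pos fun i _ => inv_pos.mpr (by exact_mod_cast (i:ℕ).factorial_pos)
  have := Hmat_det_pos d
  positivity

def LmatC (d : ℕ) : Matrix (Fin d) (Fin d) ℂ :=
  Matrix.of fun i j =>
    ((((i:ℕ) + (j:ℕ)).choose (i:ℕ) : ℂ)) * ((((i:ℕ) + (j:ℕ) + 1).factorial : ℂ))⁻¹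

lemma key_nat (i j : ℕ) :
    (i+j).choose i * (i.factorial * j.factorial * (i+j+1)) = (i+j+1).factorial := by
  rw [Nat.factorial_succ, ← Nat.add_choose_mul_factorial_mul_factorial i j,
    show (i+j).choose j = (i+j).choose i from by
      rw [← Nat.choose_symm (Nat.le_add_right i j), Nat.add_sub_cancel_left]]
  ring

lemma LmatC_eq_map (d : ℕ) : LmatC d = (LmatR d).map (algebraMap ℝ ℂ) := by
  ext i j
  simp only [LmatC, LmatR, Matrix.map_apply, Matrix.of_apply, Complex.coe_algebraMap]
  have key := congrArg (Nat.cast : ℕ → ℂ) (key_nat (i:ℕ) (j:ℕ))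
  push_cast at key
  have f1 : ((i:ℕ).factorial : ℂ) ≠ 0 := Nat.cast_ne_zero.mpr (i:ℕ).factorial_ne_zero
  have f2 : ((j:ℕ).factorial : ℂ) ≠ 0 := Nat.cast_ne_zero.mpr (j:ℕ).factorial_ne_zero
  have f3 : ((((i:ℕ)+(j:ℕ)+1).factorial : ℕ) : ℂ) ≠ 0 :=
    Nat.cast_ne_zero.mpr (Nat.factorial_ne_zero _)
  have f4 : (((i:ℕ):ℂ) + ((j:ℕ):ℂ) + 1) ≠ 0 := by
    have : ((((i:ℕ)+(j:ℕ)+1 : ℕ)) : ℂ) ≠ 0 := Nat.cast_ne_zero.mpr (by omega)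
    push_cast at this
    exact this
  push_cast
  field_simp
  linear_combination key

lemma LmatC_det_ne_zero (d : ℕ) : (LmatC d).det ≠ 0 := by
  rw [LmatC_eq_map,
    show (LmatR d).map (algebraMap ℝ ℂ) = (algebraMap ℝ ℂ).mapMatrix (LmatR d) from rfl,
    ← RingHom.map_det]
  simp only [Complex.coe_algebraMap, ne_eq, Complex.ofReal_eq_zero]
  exact ne_of_gt (LmatR_det_pos d)



lemma mIdx_inj {a b i j : ℕ} (h : mIdx a b = mIdx i j) : a = i ∧ b = j := by
  constructor
  · have := congrArg (fun m : Fin 2 →₀ ℕ => m 0) h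
    simpa [mIdx_apply0] using this
  · have := congrArg (fun m : Fin 2 →₀ ℕ => m 1) h
    simpa [mIdx_apply1] using this

lemma XY_pow (a b : ℕ) : (MvPolynomial.X 0 : P2) ^ a * (MvPolynomial.X 1 : P2) ^ b
    = MvPolynomial.monomial (mIdx a b) 1 := by
  rw [MvPolynomial.X_pow_eq_monomial, MvPolynomial.X_pow_eq_monomial,
    MvPolynomial.monomial_mul, mul_one]
  rfl

lemma choose_fact_ne_zero (i j : ℕ) :
    ((i+j).choose i : ℂ) * (((i+j+1).factorial : ℂ))⁻¹ ≠ 0 := by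
  apply mul_ne_zero
  · exact Nat.cast_ne_zero.mpr (Nat.choose_pos (Nat.le_add_right i j)).ne'
  · exact inv_ne_zero (Nat.cast_ne_zero.mpr (Nat.factorial_ne_zero _))

lemma Rpoly_natDegree (d i j : ℕ) (h : i + j ≤ 2 * d - 2) (hd : 1 ≤ d) :
    (Rpoly d i j).natDegree = i + j + 1 := by
  refine le_antisymm (Rpoly_natDegree_le d i j) (le_natDegree_of_ne_zero ?_)
  rw [Rpoly_coeff_top d i j h hd]
  exact choose_fact_ne_zero i j

lemma Rpoly_leadingCoeff (d i j : ℕ) (h : i + j ≤ 2 * d - 2) (hd : 1 ≤ d) :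
    (Rpoly d i j).leadingCoeff = ((i+j).choose i : ℂ) * (((i+j+1).factorial : ℂ))⁻¹ := by
  rw [leadingCoeff, Rpoly_natDegree d i j h hd, Rpoly_coeff_top d i j h hd]

lemma Rpoly_ne_zero (d i j : ℕ) (h : i + j ≤ 2 * d - 2) (hd : 1 ≤ d) :
    Rpoly d i j ≠ 0 := by
  intro h0
  have := Rpoly_leadingCoeff d i j h hd
  rw [h0, leadingCoeff_zero] at this
  exact choose_fact_ne_zero i j this.symm

lemma coeff_zero_of_mem_span {d : ℕ} {p : P2}
    (hp : p ∈ Ideal.span ({(MvPolynomial.X 0 : P2) ^ d, (MvPolynomial.X 1 : P2) ^ d} : Set P2))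
    {i j : ℕ} (hi : i < d) (hj : j < d) : MvPolynomial.coeff (mIdx i j) p = 0 := by
  rw [Ideal.mem_span_pair] at hp
  obtain ⟨u, v, huv⟩ := hp
  rw [← huv, MvPolynomial.coeff_add]
  have h1 : MvPolynomial.coeff (mIdx i j) (u * (MvPolynomial.X 0 : P2) ^ d) = 0 := by
    rw [MvPolynomial.X_pow_eq_monomial, MvPolynomial.coeff_mul_monomial', if_neg]
    intro hle
    have := hle 0
    rw [Finsupp.single_eq_same, mIdx_apply0] at this
    omega
  have h2 : MvPolynomial.coeff (mIdx i j) (v * (MvPolynomial.X 1 : P2) ^ d) = 0 := by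
    rw [MvPolynomial.X_pow_eq_monomial, MvPolynomial.coeff_mul_monomial', if_neg]
    intro hle
    have := hle 1
    rw [Finsupp.single_eq_same, mIdx_apply1] at this
    omega
  rw [h1, h2, add_zero]

lemma coeff_B {d : ℕ} (e : Fin d → Fin d → ℂ) (i j : Fin d) :
    MvPolynomial.coeff (mIdx (i:ℕ) (j:ℕ))
      (∑ a : Fin d, ∑ b : Fin d, e a b • ((MvPolynomial.X 0 : P2) ^ (a:ℕ)
        * (MvPolynomial.X 1 : P2) ^ (b:ℕ))) = e i j := by
  rw [MvPolynomial.coeff_sum]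
  rw [Finset.sum_eq_single i]
  · rw [MvPolynomial.coeff_sum]
    rw [Finset.sum_eq_single j]
    · rw [MvPolynomial.coeff_smul, XY_pow, MvPolynomial.coeff_monomial, if_pos rfl,
        smul_eq_mul, mul_one]
    · intro b _ hb
      rw [MvPolynomial.coeff_smul, XY_pow, MvPolynomial.coeff_monomial, if_neg, smul_zero]
      intro hh
      exact hb (Fin.ext (mIdx_inj hh).2)
    · simp
  · intro a _ ha
    rw [MvPolynomial.coeff_sum]
    apply Finset.sum_eq_zero
    intro b _
    rw [MvPolynomial.coeff_smul, XY_pow, MvPolynomial.coeff_monomial, if_neg, smul_zero]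
    intro hh
    exact ha (Fin.ext (mIdx_inj hh).1)
  · simp

lemma coeff_A (d i j n : ℕ) :
    MvPolynomial.coeff (mIdx i j)
      (∑ q ∈ Finset.range (2 * d - 1), ((n.choose (q+1) : ℂ)) • T ^ q)
      = (Rpoly d i j).eval (n : ℂ) := by
  rw [MvPolynomial.coeff_sum, Rpoly_eval]
  refine Finset.sum_congr rfl fun q _ => ?_
  rw [MvPolynomial.coeff_smul, smul_eq_mul]
  rfl

lemma det_Rpoly_natDegree (d : ℕ) (hd : 1 ≤ d) :
    (Matrix.of fun i j : Fin d => Rpoly d (i:ℕ) (j:ℕ)).det.natDegree = d ^ 2 := by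
  have hb : ∀ i j : Fin d, (i:ℕ) + (j:ℕ) ≤ 2 * d - 2 := by
    intro i j
    have := i.isLt
    have := j.isLt
    omega
  have hsum : ∀ σ : Equiv.Perm (Fin d), ∑ i : Fin d, ((σ i : ℕ) + (i:ℕ) + 1) = d ^ 2 := by
    intro σ
    obtain ⟨e, rfl⟩ : ∃ e, d = e + 1 := ⟨d - 1, by omega⟩
    rw [Finset.sum_add_distrib, Finset.sum_add_distrib,
      Equiv.sum_comp σ (fun i : Fin (e+1) => (i:ℕ))]
    have h1 : ∑ i : Fin (e+1), (i:ℕ) = ∑ i ∈ Finset.range (e+1), i :=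
      Fin.sum_univ_eq_sum_range (fun i => i) (e+1)
    have h2 : (∑ i ∈ Finset.range (e+1), i) * 2 = (e+1) * e := by
      rw [Finset.sum_range_id_mul_two]
      simp
    simp only [h1, Finset.sum_const, Finset.card_univ, Fintype.card_fin, smul_eq_mul, mul_one]
    nlinarith [h2]
  have hprodne : ∀ σ : Equiv.Perm (Fin d), ∀ i : Fin d, Rpoly d ((σ i : ℕ)) ((i:ℕ)) ≠ 0 :=
    fun σ i => Rpoly_ne_zero d _ _ (hb _ _) hd
  have hdeg : ∀ σ : Equiv.Perm (Fin d),
      (∏ i : Fin d, Rpoly d ((σ i : ℕ)) ((i:ℕ))).natDegree = d ^ 2 := by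
    intro σ
    rw [Polynomial.natDegree_prod _ _ (fun i _ => hprodne σ i)]
    rw [← hsum σ]
    exact Finset.sum_congr rfl fun i _ => Rpoly_natDegree d _ _ (hb _ _) hd
  have hcoeff : (Matrix.of fun i j : Fin d => Rpoly d (i:ℕ) (j:ℕ)).det.coeff (d ^ 2)
      = (LmatC d).det := by
    rw [Matrix.det_apply', Matrix.det_apply', Polynomial.finset_sum_coeff]
    simp only [Matrix.of_apply]
    refine Finset.sum_congr rfl fun σ _ => ?_
    rw [← Polynomial.C_eq_intCast, Polynomial.coeff_C_mul]
    congr 1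
    have h3 : (∏ i : Fin d, Rpoly d ((σ i : ℕ)) ((i:ℕ))).coeff (d^2)
        = (∏ i : Fin d, Rpoly d ((σ i : ℕ)) ((i:ℕ))).leadingCoeff := by
      rw [leadingCoeff, hdeg σ]
    rw [h3, Polynomial.leadingCoeff_prod]
    refine Finset.prod_congr rfl fun i _ => ?_
    rw [Rpoly_leadingCoeff d _ _ (hb _ _) hd]
    rfl
  have hle : (Matrix.of fun i j : Fin d => Rpoly d (i:ℕ) (j:ℕ)).det.natDegree ≤ d ^ 2 := by
    rw [Matrix.det_apply']
    simp only [Matrix.of_apply]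
    refine Polynomial.natDegree_sum_le_of_forall_le _ _ fun σ _ => ?_
    rw [← Polynomial.C_eq_intCast]
    refine (Polynomial.natDegree_C_mul_le _ _).trans ?_
    exact le_of_eq (hdeg σ)
  refine le_antisymm hle (Polynomial.le_natDegree_of_ne_zero ?_)
  rw [hcoeff]
  exact LmatC_det_ne_zero d

end
end Stmt10Aux


open Stmt10Aux in
/-- Core computation for tori: with `N` multiplication by `XY+X+Y` on `ℂ[X,Y]/(X^d,Y^d)`
and `Ω(n) = Σ_{q=0}^{2d−2} C(n,q+1) N^q(1) = Σ_{i,j} P_{d−i,d−j}(n) Xⁱ Yʲ`,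
the determinant of the matrix of coefficient polynomials has degree exactly `d²`. -/
theorem stmt10 (d : ℕ) (hd : 1 ≤ d) (Q : Fin d → Fin d → Polynomial ℂ) :
    let P := MvPolynomial (Fin 2) ℂ
    let X : P := MvPolynomial.X 0
    let Y : P := MvPolynomial.X 1
    let I : Ideal P := Ideal.span {X ^ d, Y ^ d}
    let π : P →+* P ⧸ I := Ideal.Quotient.mk I
    let N : (P ⧸ I) →ₗ[ℂ] (P ⧸ I) := LinearMap.mulLeft ℂ (π (X * Y + X + Y))
    (∀ n : ℕ, ∑ q ∈ Finset.range (2 * d - 1), ((n.choose (q + 1) : ℂ)) • (N ^ q) 1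
        = π (∑ i : Fin d, ∑ j : Fin d,
            (Polynomial.eval (n : ℂ) (Q i j)) • (X ^ (i : ℕ) * Y ^ (j : ℕ)))) →
    (Matrix.of fun i j => Q i j).det.natDegree = d ^ 2 := by
  intro P X Y I π N hQ
  have hQR : ∀ i j : Fin d, Q i j = Rpoly d (i:ℕ) (j:ℕ) := by
    intro i j
    apply Polynomial.eq_of_infinite_eval_eq
    apply Set.infinite_of_injective_forall_mem (f := fun n : ℕ => (n : ℂ))
      (hi := Nat.cast_injective)
    intro n
    show Polynomial.eval ((n:ℕ) : ℂ) (Q i j) = Polynomial.eval ((n:ℕ) : ℂ) (Rpoly d (i:ℕ) (j:ℕ))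
    have h := hQ n
    have hNq : ∀ q : ℕ, (N ^ q) (1 : P ⧸ I) = π (T ^ q) := by
      intro q
      show ((LinearMap.mulLeft ℂ (π (X * Y + X + Y))) ^ q) 1 = π (T ^ q)
      rw [LinearMap.pow_mulLeft, LinearMap.mulLeft_apply, mul_one, ← map_pow]
      rfl
    have hsmul : ∀ (z : ℂ) (p : MvPolynomial (Fin 2) ℂ), z • π p = π (z • p) := by
      intro z p
      exact (map_smul (Ideal.Quotient.mkₐ ℂ I) z p).symm
    have hA : (∑ q ∈ Finset.range (2*d-1), ((n.choose (q+1) : ℂ)) • (N ^ q) 1)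
        = π (∑ q ∈ Finset.range (2*d-1), ((n.choose (q+1) : ℂ)) • T ^ q) := by
      rw [map_sum]
      exact Finset.sum_congr rfl fun q _ => by rw [hNq q, hsmul]
    rw [hA] at h
    rw [Ideal.Quotient.eq] at h
    have hc := coeff_zero_of_mem_span (d := d) h i.isLt j.isLt
    rw [MvPolynomial.coeff_sub, sub_eq_zero] at hc
    rw [coeff_A d (i:ℕ) (j:ℕ) n] at hc
    rw [coeff_B (fun a b => Polynomial.eval ((n:ℕ):ℂ) (Q a b)) i j] at hc
    exact hc.symm
  have hmat : (Matrix.of fun i j => Q i j)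
      = Matrix.of fun i j : Fin d => Rpoly d (i:ℕ) (j:ℕ) := by
    exact congrArg Matrix.of (funext fun i => funext fun j => hQR i j)
  rw [hmat]
  exact det_Rpoly_natDegree d hd
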